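/- Let R be a commutative ring, u, v ∈ R, and m ≥ 1. With A, B, C, D and the block matrix M defined as follows — A = [[1, −1], [0, v]], B = [[−u, u], [0, −1]], C = [[−1, u], [v, −1]], D = [[1, −u], [0, 0]], and M the 2(m+1) × 2(m+1) block matrix with (1,1) block C, (1, m+1) block D, (i, i−1) block A and (i, i) block B for 2 ≤ i ≤ m+1, all other blocks zero — one has det M = (u − 1)(v − 1)(uv − 1) · Σ_{i=0}^{m−1} Σ_{j=i}^{m−1} v^i u^j. (This is the full statement of the base case Δ₀(VT(1,…,1)) for the virtual twist knot with m ones.) -/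

import Mathlib

set_option maxHeartbeats 1000000

namespace VTaux2
open Matrix Finset

variable {R : Type*} [CommRing R]

def blk (u v : R) (Q : Matrix (Fin 2) (Fin 2) R) (m : ℕ) :
    Matrix (Fin (m + 1) × Fin 2) (Fin (m + 1) × Fin 2) R :=
  Matrix.of fun p q =>
    (if (p.1 : ℕ) = 0 ∧ (q.1 : ℕ) = 0 then (!![-1, u; v, -1] : Matrix (Fin 2) (Fin 2) R) p.2 q.2 else 0)
    + (if (p.1 : ℕ) = 0 ∧ (q.1 : ℕ) = m then Q p.2 q.2 else 0)
    + (if (q.1 : ℕ) + 1 = (p.1 : ℕ) then (!![1, -1; 0, v] : Matrix (Fin 2) (Fin 2) R) p.2 q.2 else 0)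
    + (if 1 ≤ (p.1 : ℕ) ∧ (q.1 : ℕ) = (p.1 : ℕ) then (!![-u, u; 0, -1] : Matrix (Fin 2) (Fin 2) R) p.2 q.2 else 0)

def esucc (m : ℕ) : (Fin (m + 1) × Fin 2) ⊕ Fin 2 ≃ Fin (m + 2) × Fin 2 where
  toFun := Sum.elim (fun p => (p.1.castSucc, p.2)) (fun s => (Fin.last (m + 1), s))
  invFun q := if h : (q.1 : ℕ) < m + 1 then .inl (⟨q.1, h⟩, q.2) else .inr q.2
  left_inv x := by
    rcases x with ⟨i, r⟩ | s
    · simp [i.isLt]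
    · simp
  right_inv q := by
    rcases q with ⟨i, r⟩
    by_cases h : (i : ℕ) < m + 1
    · simp [h, Fin.ext_iff]
    · simp [h, Fin.ext_iff, Fin.last]; omega

lemma B_mul_Binv (u : R) [Invertible u] :
    (!![-u, u; 0, -1] : Matrix (Fin 2) (Fin 2) R) * !![-⅟u, -1; 0, -1] = 1 := by
  rw [Matrix.mul_fin_two, Matrix.one_fin_two]
  congr 1 <;> simp [mul_invOf_self]

lemma Binv_mul_B (u : R) [Invertible u] :
    (!![-⅟u, -1; 0, -1] : Matrix (Fin 2) (Fin 2) R) * !![-u, u; 0, -1] = 1 := by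
  rw [Matrix.mul_fin_two, Matrix.one_fin_two]
  congr 1 <;> simp [invOf_mul_self]

lemma Binv_mul_A (u v : R) [Invertible u] :
    (!![-⅟u, -1; 0, -1] : Matrix (Fin 2) (Fin 2) R) * !![1, -1; 0, v]
    = -(!![⅟u, v - ⅟u; 0, v]) := by
  rw [Matrix.mul_fin_two]
  ext i j
  fin_cases i <;> fin_cases j <;> simp <;> ring

lemma peel (u v : R) [Invertible u] (Q : Matrix (Fin 2) (Fin 2) R) (m : ℕ) :
    (blk u v Q (m + 1)).det
      = u * (blk u v (Q * !![⅟u, v - ⅟u; 0, v]) m).det := by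
  classical
  letI : Invertible (!![-u, u; 0, -1] : Matrix (Fin 2) (Fin 2) R) :=
    ⟨!![-⅟u, -1; 0, -1], Binv_mul_B u, B_mul_Binv u⟩
  have hinvOf : ⅟(!![-u, u; 0, -1] : Matrix (Fin 2) (Fin 2) R) = !![-⅟u, -1; 0, -1] := rfl
  set cmat : Matrix (Fin (m + 1) × Fin 2) (Fin 2) R :=
    Matrix.of (fun p s => if (p.1 : ℕ) = 0 then Q p.2 s else 0) with hcmat
  set rmat : Matrix (Fin 2) (Fin (m + 1) × Fin 2) R :=
    Matrix.of (fun s q => if (q.1 : ℕ) = m then (!![1, -1; 0, v] : Matrix (Fin 2) (Fin 2) R) s q.2 else 0) with hrmat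
  have key : (blk u v Q (m + 1)).submatrix (esucc m) (esucc m)
      = fromBlocks (blk u v 0 m) cmat rmat !![-u, u; 0, -1] := by
    ext x y
    rcases x with ⟨i, r⟩ | s <;> rcases y with ⟨j, c⟩ | t <;>
      simp only [submatrix_apply, esucc, Equiv.coe_fn_mk, Sum.elim_inl, Sum.elim_inr,
        fromBlocks_apply₁₁, fromBlocks_apply₁₂, fromBlocks_apply₂₁, fromBlocks_apply₂₂,
        blk, of_apply, Fin.coe_castSucc, Fin.val_last, hcmat, hrmat]
    · have hj : ¬((i : ℕ) = 0 ∧ (j : ℕ) = m + 1) := by omega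
      rw [if_neg hj]
      have hj' : ((i : ℕ) = 0 ∧ (j : ℕ) = m) → ((0 : Matrix (Fin 2) (Fin 2) R) r c = 0) := by
        simp
      split_ifs <;> simp
    · split_ifs <;> first | rfl | (exfalso; omega) | simp_all
    · split_ifs <;> first | rfl | (exfalso; omega) | simp_all
    · split_ifs <;> first | rfl | (exfalso; omega) | simp_all
  have hdet1 : (blk u v Q (m + 1)).det = (fromBlocks (blk u v 0 m) cmat rmat !![-u, u; 0, -1]).det := by
    rw [← key, Matrix.det_submatrix_equiv_self]
  rw [hdet1, Matrix.det_fromBlocks₂₂, hinvOf]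
  have hdetB : (!![-u, u; 0, -1] : Matrix (Fin 2) (Fin 2) R).det = u := by simp [Matrix.det_fin_two_of]
  rw [hdetB]
  congr 1
  -- now show the Schur complement equals blk u v (Q * W) m
  have hcr : cmat * !![-⅟u, -1; 0, -1] * rmat
      = Matrix.of (fun p q => if (p.1 : ℕ) = 0 ∧ (q.1 : ℕ) = m
          then (Q * !![-⅟u, -1; 0, -1] * !![1, -1; 0, v]) p.2 q.2 else 0) := by
    ext p q
    simp only [Matrix.mul_apply, hcmat, hrmat, of_apply]
    by_cases hp : (p.1 : ℕ) = 0
    · by_cases hq : (q.1 : ℕ) = m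
      · simp only [hp, hq, if_pos, and_self, if_true]
      · simp [hp, hq]
    · simp [hp]
  congr 1
  rw [hcr]
  ext p q
  have hQW : Q * !![-⅟u, -1; 0, -1] * !![1, -1; 0, v] = -(Q * !![⅟u, v - ⅟u; 0, v]) := by
    rw [Matrix.mul_assoc, Binv_mul_A, Matrix.mul_neg]
  simp only [blk, of_apply, Matrix.sub_apply, hQW, Matrix.neg_apply]
  by_cases h : (p.1 : ℕ) = 0 ∧ (q.1 : ℕ) = m
  · simp only [if_pos h, Matrix.zero_apply, add_zero, zero_add]
    ring
  · simp only [if_neg h]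
    simp


lemma W_pow (u v : R) [Invertible u] (m : ℕ) :
    (!![⅟u, v - ⅟u; 0, v] : Matrix (Fin 2) (Fin 2) R) ^ m
      = !![(⅟u)^m, v^m - (⅟u)^m; 0, v^m] := by
  induction m with
  | zero =>
    ext i j
    fin_cases i <;> fin_cases j <;> simp [Matrix.one_fin_two]
  | succ m ih =>
    rw [pow_succ, ih, Matrix.mul_fin_two]
    ext i j
    fin_cases i <;> fin_cases j <;> simp <;> ring

def e0 : Fin 2 ≃ Fin 1 × Fin 2 where
  toFun s := (0, s)
  invFun p := p.2
  left_inv s := rfl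
  right_inv p := by
    rcases p with ⟨i, s⟩
    simp [Subsingleton.elim (0 : Fin 1) i]

lemma det_blk (u v : R) [Invertible u] (m : ℕ) (Q : Matrix (Fin 2) (Fin 2) R) :
    (blk u v Q m).det
      = u ^ m * (!![-1, u; v, -1] + Q * (!![⅟u, v - ⅟u; 0, v] : Matrix (Fin 2) (Fin 2) R) ^ m).det := by
  induction m generalizing Q with
  | zero =>
    rw [pow_zero, pow_zero, one_mul, Matrix.mul_one]
    rw [← Matrix.det_submatrix_equiv_self e0 (blk u v Q 0)]
    congr 1
    ext s t
    simp [blk, e0, Matrix.add_apply]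
  | succ m ih =>
    rw [peel, ih, pow_succ, Matrix.mul_assoc, ← pow_succ']
    ring

def Mmat (u v : R) (m : ℕ) : Matrix (Fin (2 * (m + 1))) (Fin (2 * (m + 1))) R :=
  Matrix.of fun (i j : Fin (2 * (m + 1))) =>
      if (i : ℕ) / 2 = 0 ∧ (j : ℕ) / 2 = 0 then
        (!![-1, u; v, -1] : Matrix (Fin 2) (Fin 2) R) ⟨(i : ℕ) % 2, Nat.mod_lt _ two_pos⟩ ⟨(j : ℕ) % 2, Nat.mod_lt _ two_pos⟩
      else if (i : ℕ) / 2 = 0 ∧ (j : ℕ) / 2 = m then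
        (!![1, -u; 0, 0] : Matrix (Fin 2) (Fin 2) R) ⟨(i : ℕ) % 2, Nat.mod_lt _ two_pos⟩ ⟨(j : ℕ) % 2, Nat.mod_lt _ two_pos⟩
      else if 1 ≤ (i : ℕ) / 2 ∧ (j : ℕ) / 2 + 1 = (i : ℕ) / 2 then
        (!![1, -1; 0, v] : Matrix (Fin 2) (Fin 2) R) ⟨(i : ℕ) % 2, Nat.mod_lt _ two_pos⟩ ⟨(j : ℕ) % 2, Nat.mod_lt _ two_pos⟩
      else if 1 ≤ (i : ℕ) / 2 ∧ (j : ℕ) / 2 = (i : ℕ) / 2 then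
        (!![-u, u; 0, -1] : Matrix (Fin 2) (Fin 2) R) ⟨(i : ℕ) % 2, Nat.mod_lt _ two_pos⟩ ⟨(j : ℕ) % 2, Nat.mod_lt _ two_pos⟩
      else 0

/-- flat-to-block index equivalence -/
def eflat (m : ℕ) : Fin (2 * (m + 1)) ≃ Fin (m + 1) × Fin 2 where
  toFun i := (⟨(i : ℕ) / 2, by omega⟩, ⟨(i : ℕ) % 2, Nat.mod_lt _ two_pos⟩)
  invFun p := ⟨2 * (p.1 : ℕ) + (p.2 : ℕ), by have := p.1.isLt; have := p.2.isLt; omega⟩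
  left_inv i := by
    apply Fin.ext
    simp
    omega
  right_inv p := by
    rcases p with ⟨a, b⟩
    have := a.isLt; have := b.isLt
    ext
    · simp; omega
    · simp; omega

lemma Mmat_eq_blk (u v : R) (m : ℕ) (hm : 1 ≤ m) :
    Mmat u v m = (blk u v !![1, -u; 0, 0] m).submatrix (eflat m) (eflat m) := by
  ext i j
  simp only [Mmat, blk, of_apply, submatrix_apply, eflat, Equiv.coe_fn_mk]
  by_cases h1 : (i : ℕ) / 2 = 0 ∧ (j : ℕ) / 2 = 0
  · rw [if_pos h1, if_pos h1, if_neg (by omega), if_neg (by omega), if_neg (by omega)]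
    simp
  · rw [if_neg h1, if_neg h1]
    by_cases h2 : (i : ℕ) / 2 = 0 ∧ (j : ℕ) / 2 = m
    · rw [if_pos h2, if_pos h2, if_neg (by omega), if_neg (by omega)]
      simp
    · rw [if_neg h2, if_neg h2]
      by_cases h3 : 1 ≤ (i : ℕ) / 2 ∧ (j : ℕ) / 2 + 1 = (i : ℕ) / 2
      · rw [if_pos h3, if_pos (show (j : ℕ) / 2 + 1 = (i : ℕ) / 2 from h3.2),
          if_neg (by omega)]
        simp
      · by_cases h4 : 1 ≤ (i : ℕ) / 2 ∧ (j : ℕ) / 2 = (i : ℕ) / 2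
        · rw [if_pos h4, if_neg h3, if_neg (show ¬((j : ℕ) / 2 + 1 = (i : ℕ) / 2) by omega)]
          simp
        · rw [if_neg h3, if_neg h4,
            if_neg (show ¬((j : ℕ) / 2 + 1 = (i : ℕ) / 2) by omega)]
          simp

lemma det_Mmat_inv (u v : R) [Invertible u] (m : ℕ) (hm : 1 ≤ m) :
    (Mmat u v m).det
      = u^m - 1 - u^(m+1) * v + v - u^m * v^(m+1) + u^(m+1) * v^(m+1) := by
  rw [Mmat_eq_blk u v m hm, Matrix.det_submatrix_equiv_self, det_blk, W_pow]
  have hD : (!![1, -u; 0, 0] : Matrix (Fin 2) (Fin 2) R) * !![(⅟u)^m, v^m - (⅟u)^m; 0, v^m]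
      = !![(⅟u)^m, v^m - (⅟u)^m - u * v^m; 0, 0] := by
    rw [Matrix.mul_fin_two]
    ext i j
    fin_cases i <;> fin_cases j <;> simp <;> ring
  rw [hD]
  have hdet2 : (!![-1, u; v, -1] + !![(⅟u)^m, v^m - (⅟u)^m - u * v^m; 0, 0]).det
      = (-1 + (⅟u)^m) * (-1) - (u + (v^m - (⅟u)^m - u * v^m)) * v := by
    have : (!![-1, u; v, -1] + !![(⅟u)^m, v^m - (⅟u)^m - u * v^m; 0, 0])
        = !![-1 + (⅟u)^m, u + (v^m - (⅟u)^m - u * v^m); v, -1] := by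
      ext i j
      fin_cases i <;> fin_cases j <;> simp
    rw [this, Matrix.det_fin_two_of]
  rw [hdet2]
  have h1 : u^m * (⅟u)^m = 1 := by
    rw [← mul_pow, mul_invOf_self, one_pow]
  linear_combination (v - 1) * h1

lemma map_fin2 {S : Type*} [CommRing S] (f : R →+* S) (a b c d : R) (i j : Fin 2) :
    f ((![![a, b], ![c, d]] : Fin 2 → Fin 2 → R) i j)
      = (![![f a, f b], ![f c, f d]] : Fin 2 → Fin 2 → S) i j := by
  fin_cases i <;> fin_cases j <;> simp

lemma map_Mmat {S : Type*} [CommRing S] (f : R →+* S) (u v : R) (m : ℕ) :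
    (Mmat u v m).map f = Mmat (f u) (f v) m := by
  ext i j
  simp only [Mmat, Matrix.map_apply, of_apply]
  split_ifs <;> first
    | (rw [map_fin2]; simp)
    | simp

lemma det_Mmat (u v : R) (m : ℕ) (hm : 1 ≤ m) :
    (Mmat u v m).det
      = u^m - 1 - u^(m+1) * v + v - u^m * v^(m+1) + u^(m+1) * v^(m+1) := by
  classical
  let S := MvPolynomial (Fin 2) ℤ
  let F := FractionRing S
  let ι : S →+* F := algebraMap S F
  have hι : Function.Injective ι := IsFractionRing.injective S F
  have hu0 : ι (MvPolynomial.X 0) ≠ 0 := by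
    intro h
    exact MvPolynomial.X_ne_zero (0 : Fin 2) (hι (by simpa using h))
  haveI : Invertible (ι (MvPolynomial.X 0)) := invertibleOfNonzero hu0
  have hdetS : (Mmat (MvPolynomial.X 0) (MvPolynomial.X 1) m).det
      = (MvPolynomial.X 0 : S)^m - 1 - (MvPolynomial.X 0 : S)^(m+1) * MvPolynomial.X 1
        + MvPolynomial.X 1 - (MvPolynomial.X 0 : S)^m * (MvPolynomial.X 1 : S)^(m+1)
        + (MvPolynomial.X 0 : S)^(m+1) * (MvPolynomial.X 1 : S)^(m+1) := by
    apply hι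
    rw [RingHom.map_det, RingHom.mapMatrix_apply, map_Mmat, det_Mmat_inv _ _ m hm]
    simp [map_sub, map_add, _root_.map_mul, map_pow, _root_.map_one]
  let f : S →+* R := MvPolynomial.eval₂Hom (Int.castRingHom R) (fun i => if i = 0 then u else v)
  have hfu : f (MvPolynomial.X 0) = u := by
    show (MvPolynomial.eval₂Hom (Int.castRingHom R) fun i => if i = 0 then u else v) (MvPolynomial.X 0) = u
    rw [MvPolynomial.eval₂Hom_X']
    simp
  have hfv : f (MvPolynomial.X 1) = v := by
    show (MvPolynomial.eval₂Hom (Int.castRingHom R) fun i => if i = 0 then u else v) (MvPolynomial.X 1) = v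
    rw [MvPolynomial.eval₂Hom_X']
    simp
  have : Mmat u v m = (Mmat (MvPolynomial.X 0) (MvPolynomial.X 1) m).map f := by
    rw [map_Mmat, hfu, hfv]
  rw [this, ← RingHom.mapMatrix_apply, ← RingHom.map_det, hdetS]
  simp [map_sub, map_add, _root_.map_mul, map_pow, _root_.map_one, hfu, hfv]

lemma sum_factor (u v : R) (m : ℕ) :
    (u - 1) * (v - 1) * (u * v - 1)
        * ∑ i ∈ Finset.range m, ∑ j ∈ Finset.Ico i m, v ^ i * u ^ j
      = u^m - 1 - u^(m+1) * v + v - u^m * v^(m+1) + u^(m+1) * v^(m+1) := by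
  induction m with
  | zero => simp
  | succ m ih =>
    have hsplit : ∑ i ∈ Finset.range (m+1), ∑ j ∈ Finset.Ico i (m+1), v ^ i * u ^ j
        = (∑ i ∈ Finset.range m, ∑ j ∈ Finset.Ico i m, v ^ i * u ^ j)
          + u ^ m * ∑ i ∈ Finset.range (m+1), v ^ i := by
      have h1 : ∀ i ∈ Finset.range (m+1), ∑ j ∈ Finset.Ico i (m+1), v ^ i * u ^ j
          = (∑ j ∈ Finset.Ico i m, v ^ i * u ^ j) + v ^ i * u ^ m := by
        intro i hi
        rw [Finset.sum_Ico_succ_top (Finset.mem_range_succ_iff.mp hi)]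
      rw [Finset.sum_congr rfl h1, Finset.sum_add_distrib, Finset.sum_range_succ
        (fun i => ∑ j ∈ Finset.Ico i m, v ^ i * u ^ j), Finset.Ico_self, Finset.sum_empty,
        add_zero, Finset.mul_sum]
      congr 1
      apply Finset.sum_congr rfl
      intro i _
      ring
    have hgeom : (∑ i ∈ Finset.range (m+1), v ^ i) * (v - 1) = v ^ (m+1) - 1 :=
      geom_sum_mul v (m+1)
    rw [hsplit]
    linear_combination ih + (u - 1) * (u * v - 1) * u ^ m * hgeom

end VTaux2


/-- The base case `Δ₀(VT(1,…,1))` for the virtual twist knot with `m` ones: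
the determinant of the Alexander matrix `M` factors as
`(u − 1)(v − 1)(uv − 1) · Σ_{0 ≤ i ≤ j ≤ m−1} vⁱ uʲ`. -/
theorem det_VT_ones_matrix_factored {R : Type*} [CommRing R] (u v : R) (m : ℕ) (hm : 1 ≤ m)
    (A B C D : Matrix (Fin 2) (Fin 2) R)
    (hA : A = !![1, -1; 0, v]) (hB : B = !![-u, u; 0, -1])
    (hC : C = !![-1, u; v, -1]) (hD : D = !![1, -u; 0, 0])
    (M : Matrix (Fin (2 * (m + 1))) (Fin (2 * (m + 1))) R)
    (hM : M = Matrix.of fun (i j : Fin (2 * (m + 1))) =>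
      if (i : ℕ) / 2 = 0 ∧ (j : ℕ) / 2 = 0 then
        C ⟨(i : ℕ) % 2, by omega⟩ ⟨(j : ℕ) % 2, by omega⟩
      else if (i : ℕ) / 2 = 0 ∧ (j : ℕ) / 2 = m then
        D ⟨(i : ℕ) % 2, by omega⟩ ⟨(j : ℕ) % 2, by omega⟩
      else if 1 ≤ (i : ℕ) / 2 ∧ (j : ℕ) / 2 + 1 = (i : ℕ) / 2 then
        A ⟨(i : ℕ) % 2, by omega⟩ ⟨(j : ℕ) % 2, by omega⟩
      else if 1 ≤ (i : ℕ) / 2 ∧ (j : ℕ) / 2 = (i : ℕ) / 2 then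
        B ⟨(i : ℕ) % 2, by omega⟩ ⟨(j : ℕ) % 2, by omega⟩
      else 0) :
    M.det = (u - 1) * (v - 1) * (u * v - 1)
      * ∑ i ∈ Finset.range m, ∑ j ∈ Finset.Ico i m, v ^ i * u ^ j := by
  subst hA hB hC hD
  have hMM : M = VTaux2.Mmat u v m := by rw [hM]; rfl
  rw [hMM, VTaux2.det_Mmat u v m hm, ← VTaux2.sum_factor]
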